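/- Let α > 2, let λ, μ > 0, and let (p_k)_{k≥2} be a nonnegative sequence with ∑_{k≥2} p_k = 1, ∑_{k≥2} k·p_k = m, ∑_{k≥2} k^α·p_k < ∞, and λ(m−1) < μ. Define V(x) := (x+1)^α and, for integers x ≥ 1, L V(x) := μ·x·(x^α − (x+1)^α) + λ·x·∑_{k≥2} p_k·((x+k)^α − (x+1)^α). Then there exist constants c > 0 and K < ∞ such that L V(x) ≤ −c·V(x) + K for all integers x ≥ 1. -/

import Mathlib

lemma mvt_rpow (beta a b : ℝ) (hb : 1 ≤ beta) (ha : 0 < a) (hab : a ≤ b) :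
    beta * a ^ (beta - 1) * (b - a) ≤ b ^ beta - a ^ beta ∧
    b ^ beta - a ^ beta ≤ beta * b ^ (beta - 1) * (b - a) := by
  rcases eq_or_lt_of_le hab with rfl | hlt
  · simp
  have hbpos : 0 < b := ha.trans hlt
  have hcont : ContinuousOn (fun t : ℝ => t ^ beta) (Set.Icc a b) := by
    apply ContinuousOn.rpow_const continuousOn_id
    intro t ht
    exact Or.inl (ne_of_gt (lt_of_lt_of_le ha ht.1))
  have hderiv : ∀ t ∈ Set.Ioo a b,
      HasDerivAt (fun t : ℝ => t ^ beta) (beta * t ^ (beta - 1)) t := by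
    intro t ht
    simpa using Real.hasDerivAt_rpow_const (p := beta) (Or.inl (ne_of_gt (ha.trans ht.1)))
  obtain ⟨c, hc, hceq⟩ := exists_hasDerivAt_eq_slope (fun t : ℝ => t ^ beta)
    (fun t => beta * t ^ (beta - 1)) hlt hcont hderiv
  have hba : 0 < b - a := sub_pos.mpr hlt
  have key : b ^ beta - a ^ beta = beta * c ^ (beta - 1) * (b - a) := by
    field_simp at hceq
    linarith [hceq]
  have hcl : a ^ (beta - 1) ≤ c ^ (beta - 1) :=
    Real.rpow_le_rpow ha.le hc.1.le (by linarith)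
  have hcu : c ^ (beta - 1) ≤ b ^ (beta - 1) :=
    Real.rpow_le_rpow (ha.trans hc.1).le hc.2.le (by linarith)
  have hbeta0 : 0 < beta := by linarith
  constructor
  · rw [key]
    have := mul_le_mul_of_nonneg_right (mul_le_mul_of_nonneg_left hcl hbeta0.le) hba.le
    linarith
  · rw [key]
    have := mul_le_mul_of_nonneg_right (mul_le_mul_of_nonneg_left hcu hbeta0.le) hba.le
    linarith

lemma perk (alpha X K : ℝ) (halpha : 2 < alpha) (hX : 1 ≤ X) (hK : 2 ≤ K) :
    (X + K) ^ alpha - (X + 1) ^ alpha ≤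
      alpha * X ^ (alpha - 1) * (K - 1)
        + alpha * (alpha - 1) * 2 ^ (alpha - 2) * X ^ (alpha - 2) * K ^ alpha := by
  have hX0 : (0:ℝ) < X := by linarith
  have hK0 : (0:ℝ) < K := by linarith
  have hXK : (0:ℝ) < X + K := by linarith
  have ha0 : (0:ℝ) < alpha := by linarith
  have h1 : (X + K) ^ alpha - (X + 1) ^ alpha ≤
      alpha * (X + K) ^ (alpha - 1) * (K - 1) := by
    have := (mvt_rpow alpha (X + 1) (X + K) (by linarith) (by linarith) (by linarith)).2
    have he : X + K - (X + 1) = K - 1 := by ring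
    rw [he] at this; exact this
  have h2 : (X + K) ^ (alpha - 1) ≤ X ^ (alpha - 1) + (alpha - 1) * (X + K) ^ (alpha - 2) * K := by
    have := (mvt_rpow (alpha - 1) X (X + K) (by linarith) hX0 (by linarith)).2
    have he : alpha - 1 - 1 = alpha - 2 := by ring
    have he2 : X + K - X = K := by ring
    rw [he, he2] at this; linarith
  have h3 : (X + K) ^ (alpha - 2) ≤ 2 ^ (alpha - 2) * X ^ (alpha - 2) * K ^ (alpha - 2) := by
    have hle : X + K ≤ 2 * X * K := by nlinarith
    calc (X + K) ^ (alpha - 2) ≤ (2 * X * K) ^ (alpha - 2) :=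
          Real.rpow_le_rpow hXK.le hle (by linarith)
      _ = 2 ^ (alpha - 2) * X ^ (alpha - 2) * K ^ (alpha - 2) := by
          rw [Real.mul_rpow (by positivity) hK0.le, Real.mul_rpow (by norm_num) hX0.le]
  have hKe : K ^ (alpha - 2) * K = K ^ (alpha - 1) := by
    rw [show alpha - 1 = (alpha - 2) + 1 by ring, Real.rpow_add_one hK0.ne']
  have hKe2 : K * K ^ (alpha - 1) = K ^ alpha := by
    rw [show alpha = (alpha - 1) + 1 by ring, Real.rpow_add_one hK0.ne']; ring
  have hK1 : (0:ℝ) ≤ K - 1 := by linarith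
  have h4 : (X + K) ^ (alpha - 1) ≤
      X ^ (alpha - 1) + (alpha - 1) * 2 ^ (alpha - 2) * X ^ (alpha - 2) * K ^ (alpha - 1) := by
    have := mul_le_mul_of_nonneg_right (mul_le_mul_of_nonneg_left h3 (by linarith : (0:ℝ) ≤ alpha - 1)) hK0.le
    calc (X + K) ^ (alpha - 1) ≤ X ^ (alpha - 1) + (alpha - 1) * (X + K) ^ (alpha - 2) * K := h2
      _ ≤ X ^ (alpha - 1) + (alpha - 1) * (2 ^ (alpha - 2) * X ^ (alpha - 2) * K ^ (alpha - 2)) * K := by linarith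
      _ = X ^ (alpha - 1) + (alpha - 1) * 2 ^ (alpha - 2) * X ^ (alpha - 2) * (K ^ (alpha - 2) * K) := by ring
      _ = X ^ (alpha - 1) + (alpha - 1) * 2 ^ (alpha - 2) * X ^ (alpha - 2) * K ^ (alpha - 1) := by rw [hKe]
  have h5 : (K - 1) * K ^ (alpha - 1) ≤ K ^ alpha := by
    rw [← hKe2]
    have : (0:ℝ) ≤ K ^ (alpha - 1) := Real.rpow_nonneg hK0.le _
    nlinarith
  calc (X + K) ^ alpha - (X + 1) ^ alpha ≤ alpha * (X + K) ^ (alpha - 1) * (K - 1) := h1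
    _ ≤ alpha * (X ^ (alpha - 1) + (alpha - 1) * 2 ^ (alpha - 2) * X ^ (alpha - 2) * K ^ (alpha - 1)) * (K - 1) := by
        have := mul_le_mul_of_nonneg_right (mul_le_mul_of_nonneg_left h4 ha0.le) hK1
        linarith
    _ = alpha * X ^ (alpha - 1) * (K - 1)
        + alpha * (alpha - 1) * 2 ^ (alpha - 2) * X ^ (alpha - 2) * ((K - 1) * K ^ (alpha - 1)) := by ring
    _ ≤ alpha * X ^ (alpha - 1) * (K - 1)
        + alpha * (alpha - 1) * 2 ^ (alpha - 2) * X ^ (alpha - 2) * K ^ alpha := by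
        have hc : (0:ℝ) ≤ alpha * (alpha - 1) * 2 ^ (alpha - 2) * X ^ (alpha - 2) := by
          have h6 : (0:ℝ) ≤ (2:ℝ) ^ (alpha - 2) := Real.rpow_nonneg (by norm_num) _
          have h7 : (0:ℝ) ≤ X ^ (alpha - 2) := Real.rpow_nonneg hX0.le _
          have h8 : (0:ℝ) ≤ alpha * (alpha - 1) := by nlinarith
          exact mul_nonneg (mul_nonneg h8 h6) h7
        have := mul_le_mul_of_nonneg_left h5 hc
        linarith

/-- Foster–Lyapunov drift condition: for `V(x) = (x+1)^α` with `α > 2` and the generator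
`L` of a subcritical birth-and-death process with multiple births, there exist `c > 0`
and `K < ∞` such that `L V(x) ≤ -c V(x) + K` for all integers `x ≥ 1`. -/
theorem stmt18 (alpha lam mu m : ℝ) (halpha : 2 < alpha) (hlam : 0 < lam)
    (hmu : 0 < mu) (p : ℕ → ℝ) (hp : ∀ k, 0 ≤ p k) (hp0 : ∀ k, k < 2 → p k = 0)
    (hsum : Summable p) (h1 : ∑' k, p k = 1)
    (hsumk : Summable fun k : ℕ => (k : ℝ) * p k) (hm : ∑' k : ℕ, (k : ℝ) * p k = m)
    (hsumka : Summable fun k : ℕ => (k : ℝ) ^ alpha * p k)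
    (hsub : lam * (m - 1) < mu) :
    ∃ c > (0 : ℝ), ∃ K : ℝ, ∀ x : ℕ, 1 ≤ x →
      mu * (x : ℝ) * ((x : ℝ) ^ alpha - ((x : ℝ) + 1) ^ alpha)
        + lam * (x : ℝ) *
          (∑' k : ℕ, p k * (((x : ℝ) + (k : ℝ)) ^ alpha - ((x : ℝ) + 1) ^ alpha))
      ≤ -c * ((x : ℝ) + 1) ^ alpha + K := by
  have ha0 : (0:ℝ) < alpha := by linarith
  have ha1 : (0:ℝ) < alpha - 1 := by linarith
  set S : ℝ := ∑' k : ℕ, (k:ℝ) ^ alpha * p k with hSdef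
  have hS0 : 0 ≤ S :=
    tsum_nonneg fun k => mul_nonneg (Real.rpow_nonneg (Nat.cast_nonneg k) _) (hp k)
  have hsub1 : Summable (fun k : ℕ => ((k:ℝ) - 1) * p k) := by
    have he : (fun k : ℕ => ((k:ℝ) - 1) * p k) = fun k : ℕ => (k:ℝ) * p k - p k := by
      funext k; ring
    rw [he]; exact hsumk.sub hsum
  have hm1 : ∑' k : ℕ, ((k:ℝ) - 1) * p k = m - 1 := by
    have he : (fun k : ℕ => ((k:ℝ) - 1) * p k) = fun k : ℕ => (k:ℝ) * p k - p k := by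
      funext k; ring
    rw [he, Summable.tsum_sub hsumk hsum, hm, h1]
  set δ : ℝ := mu - lam * (m - 1) with hδdef
  have hδ : 0 < δ := by simp only [hδdef]; linarith
  have h2a2 : (0:ℝ) ≤ (2:ℝ) ^ (alpha - 2) := Real.rpow_nonneg (by norm_num) _
  set C : ℝ := alpha * (alpha - 1) * 2 ^ (alpha - 2) with hCdef
  have hC0 : 0 ≤ C := by
    have : (0:ℝ) ≤ alpha * (alpha - 1) := by nlinarith
    exact mul_nonneg this h2a2
  set E : ℝ := lam * C * S with hEdef
  have hE0 : 0 ≤ E := mul_nonneg (mul_nonneg hlam.le hC0) hS0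
  have h2apos : (0:ℝ) < (2:ℝ) ^ alpha := Real.rpow_pos_of_pos (by norm_num) _
  have hc_pos : (0:ℝ) < alpha * δ / (2 * 2 ^ alpha) :=
    div_pos (mul_pos ha0 hδ) (by positivity)
  refine ⟨alpha * δ / (2 * 2 ^ alpha), hc_pos,
    E * (2 * E / (alpha * δ) + 1) ^ (alpha - 1), ?_⟩
  intro x hx
  have hX1 : (1:ℝ) ≤ (x:ℝ) := by exact_mod_cast hx
  set X : ℝ := (x:ℝ) with hXdef
  have hX0 : (0:ℝ) < X := by linarith
  -- bound the tsum
  have hfg : ∀ k : ℕ, p k * ((X + (k:ℝ)) ^ alpha - (X + 1) ^ alpha) ≤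
      alpha * X ^ (alpha - 1) * (((k:ℝ) - 1) * p k)
        + C * X ^ (alpha - 2) * ((k:ℝ) ^ alpha * p k) := by
    intro k
    by_cases hk : k < 2
    · rw [hp0 k hk]; ring_nf; exact le_refl _
    · push_neg at hk
      have hK2 : (2:ℝ) ≤ (k:ℝ) := by exact_mod_cast hk
      have := mul_le_mul_of_nonneg_left (perk alpha X (k:ℝ) halpha hX1 hK2) (hp k)
      calc p k * ((X + (k:ℝ)) ^ alpha - (X + 1) ^ alpha)
          ≤ p k * (alpha * X ^ (alpha - 1) * ((k:ℝ) - 1)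
              + alpha * (alpha - 1) * 2 ^ (alpha - 2) * X ^ (alpha - 2) * (k:ℝ) ^ alpha) := this
        _ = alpha * X ^ (alpha - 1) * (((k:ℝ) - 1) * p k)
              + C * X ^ (alpha - 2) * ((k:ℝ) ^ alpha * p k) := by
            simp only [hCdef]; ring
  have hf0 : ∀ k : ℕ, 0 ≤ p k * ((X + (k:ℝ)) ^ alpha - (X + 1) ^ alpha) := by
    intro k
    by_cases hk : k < 2
    · rw [hp0 k hk]; simp
    · push_neg at hk
      have hK2 : (2:ℝ) ≤ (k:ℝ) := by exact_mod_cast hk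
      have : (X + 1) ^ alpha ≤ (X + (k:ℝ)) ^ alpha :=
        Real.rpow_le_rpow (by linarith) (by linarith) ha0.le
      exact mul_nonneg (hp k) (by linarith)
  have hg_sum : Summable (fun k : ℕ =>
      alpha * X ^ (alpha - 1) * (((k:ℝ) - 1) * p k)
        + C * X ^ (alpha - 2) * ((k:ℝ) ^ alpha * p k)) :=
    (hsub1.mul_left _).add (hsumka.mul_left _)
  have hf_sum : Summable (fun k : ℕ => p k * ((X + (k:ℝ)) ^ alpha - (X + 1) ^ alpha)) :=
    Summable.of_nonneg_of_le hf0 hfg hg_sum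
  have htsum : (∑' k : ℕ, p k * ((X + (k:ℝ)) ^ alpha - (X + 1) ^ alpha)) ≤
      alpha * X ^ (alpha - 1) * (m - 1) + C * X ^ (alpha - 2) * S := by
    calc (∑' k : ℕ, p k * ((X + (k:ℝ)) ^ alpha - (X + 1) ^ alpha))
        ≤ ∑' k : ℕ, (alpha * X ^ (alpha - 1) * (((k:ℝ) - 1) * p k)
            + C * X ^ (alpha - 2) * ((k:ℝ) ^ alpha * p k)) :=
          Summable.tsum_le_tsum hfg hf_sum hg_sum
      _ = alpha * X ^ (alpha - 1) * (m - 1) + C * X ^ (alpha - 2) * S := by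
          rw [Summable.tsum_add (hsub1.mul_left _) (hsumka.mul_left _), tsum_mul_left,
            tsum_mul_left, hm1]
  -- death bound
  have hdeath : X ^ alpha - (X + 1) ^ alpha ≤ -(alpha * X ^ (alpha - 1)) := by
    have := (mvt_rpow alpha X (X + 1) (by linarith) hX0 (by linarith)).1
    have he : X + 1 - X = 1 := by ring
    rw [he, mul_one] at this; linarith
  -- rpow identities
  have hXa : X * X ^ (alpha - 1) = X ^ alpha := by
    rw [show alpha = (alpha - 1) + 1 by ring, Real.rpow_add_one hX0.ne']; ring
  have hXb : X * X ^ (alpha - 2) = X ^ (alpha - 1) := by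
    rw [show alpha - 1 = (alpha - 2) + 1 by ring, Real.rpow_add_one hX0.ne']; ring
  have hXapos : (0:ℝ) ≤ X ^ alpha := Real.rpow_nonneg hX0.le _
  have hXa1pos : (0:ℝ) ≤ X ^ (alpha - 1) := Real.rpow_nonneg hX0.le _
  -- main assembly
  have hmain : mu * X * (X ^ alpha - (X + 1) ^ alpha)
      + lam * X * (∑' k : ℕ, p k * ((X + (k:ℝ)) ^ alpha - (X + 1) ^ alpha))
      ≤ -(alpha * δ) * X ^ alpha + E * X ^ (alpha - 1) := by
    have t1 : mu * X * (X ^ alpha - (X + 1) ^ alpha) ≤ mu * X * (-(alpha * X ^ (alpha - 1))) :=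
      mul_le_mul_of_nonneg_left hdeath (mul_pos hmu hX0).le
    have t2 : lam * X * (∑' k : ℕ, p k * ((X + (k:ℝ)) ^ alpha - (X + 1) ^ alpha)) ≤
        lam * X * (alpha * X ^ (alpha - 1) * (m - 1) + C * X ^ (alpha - 2) * S) :=
      mul_le_mul_of_nonneg_left htsum (mul_pos hlam hX0).le
    have e1 : mu * X * (-(alpha * X ^ (alpha - 1))) = -(mu * alpha) * X ^ alpha := by
      rw [← hXa]; ring
    have e2 : lam * X * (alpha * X ^ (alpha - 1) * (m - 1) + C * X ^ (alpha - 2) * S)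
        = lam * (m - 1) * alpha * X ^ alpha + E * X ^ (alpha - 1) := by
      rw [← hXa, ← hXb, hEdef]; ring
    rw [e1] at t1; rw [e2] at t2
    have : -(mu * alpha) * X ^ alpha + lam * (m - 1) * alpha * X ^ alpha
        = -(alpha * δ) * X ^ alpha := by rw [hδdef]; ring
    linarith
  -- final comparison
  have hfin : -(alpha * δ) * X ^ alpha + E * X ^ (alpha - 1) ≤
      -(alpha * δ / (2 * 2 ^ alpha)) * (X + 1) ^ alpha
        + E * (2 * E / (alpha * δ) + 1) ^ (alpha - 1) := by
    have hb1 : (X + 1) ^ alpha ≤ 2 ^ alpha * X ^ alpha := by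
      calc (X + 1) ^ alpha ≤ (2 * X) ^ alpha :=
            Real.rpow_le_rpow (by linarith) (by linarith) ha0.le
        _ = 2 ^ alpha * X ^ alpha := Real.mul_rpow (by norm_num) hX0.le
    have hb2 : (alpha * δ / (2 * 2 ^ alpha)) * (X + 1) ^ alpha ≤ alpha * δ / 2 * X ^ alpha := by
      have := mul_le_mul_of_nonneg_left hb1 hc_pos.le
      calc (alpha * δ / (2 * 2 ^ alpha)) * (X + 1) ^ alpha
          ≤ (alpha * δ / (2 * 2 ^ alpha)) * (2 ^ alpha * X ^ alpha) := this
        _ = alpha * δ / 2 * X ^ alpha := by field_simp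
    have hkey : E * X ^ (alpha - 1) ≤ alpha * δ / 2 * X ^ alpha
        + E * (2 * E / (alpha * δ) + 1) ^ (alpha - 1) := by
      by_cases hcase : X ≤ 2 * E / (alpha * δ) + 1
      · have h01 : E * X ^ (alpha - 1) ≤ E * (2 * E / (alpha * δ) + 1) ^ (alpha - 1) :=
          mul_le_mul_of_nonneg_left
            (Real.rpow_le_rpow hX0.le hcase ha1.le) hE0
        have hnn : (0:ℝ) ≤ alpha * δ / 2 * X ^ alpha :=
          mul_nonneg (div_nonneg (mul_pos ha0 hδ).le (by norm_num)) hXapos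
        linarith
      · push_neg at hcase
        have hE' : E ≤ alpha * δ / 2 * X := by
          have had : (0:ℝ) < alpha * δ := mul_pos ha0 hδ
          rw [div_add' _ _ _ had.ne'] at hcase
          rw [div_lt_iff₀ had] at hcase
          nlinarith
        have : E * X ^ (alpha - 1) ≤ (alpha * δ / 2 * X) * X ^ (alpha - 1) :=
          mul_le_mul_of_nonneg_right hE' hXa1pos
        have hK0 : (0:ℝ) ≤ E * (2 * E / (alpha * δ) + 1) ^ (alpha - 1) := by
          apply mul_nonneg hE0 (Real.rpow_nonneg _ _)
          have := div_nonneg (by linarith : (0:ℝ) ≤ 2 * E) (mul_pos ha0 hδ).le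
          linarith
        calc E * X ^ (alpha - 1) ≤ (alpha * δ / 2 * X) * X ^ (alpha - 1) := this
          _ = alpha * δ / 2 * X ^ alpha := by rw [mul_assoc, hXa]
          _ ≤ _ := by linarith
    linarith
  calc mu * X * (X ^ alpha - (X + 1) ^ alpha)
      + lam * X * (∑' k : ℕ, p k * ((X + (k:ℝ)) ^ alpha - (X + 1) ^ alpha))
      ≤ -(alpha * δ) * X ^ alpha + E * X ^ (alpha - 1) := hmain
    _ ≤ -(alpha * δ / (2 * 2 ^ alpha)) * (X + 1) ^ alpha
        + E * (2 * E / (alpha * δ) + 1) ^ (alpha - 1) := hfin
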